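/- Let G be a connected finite graph containing a shortest path P of eccentricity k. Let x be the last vertex visited by a BFS from an arbitrary vertex r (i.e., x is a vertex maximizing d(r,x)), and let y be a vertex maximizing d(x,y). Then any shortest path from x to y has eccentricity at most 5k. In other words, double-BFS is a 5-approximation for the Minimum Eccentricity Shortest Path problem. -/
import Mathlib


open SimpleGraph

variable {V : Type*}

/-- Distance from a vertex `x` to (the support of) a walk `p`. -/
noncomputable def walkDist (G : SimpleGraph V) {u v : V} (x : V) (p : G.Walk u v) : ℕ :=
  sInf {n | ∃ w ∈ p.support, G.dist x w = n}

/-- A walk is a shortest path when its length equals the distance between its ends. -/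
noncomputable def IsShortestPath (G : SimpleGraph V) {u v : V} (p : G.Walk u v) : Prop :=
  p.length = G.dist u v

/-- Eccentricity of a walk: the largest distance from any vertex to the walk. -/
noncomputable def walkEcc [Fintype V] (G : SimpleGraph V) {u v : V} (p : G.Walk u v) : ℕ :=
  sSup {n | ∃ x : V, walkDist G x p = n}

/-- A diameter: a shortest path of maximum length among all distances. -/
noncomputable def IsDiameter [Fintype V] (G : SimpleGraph V) {u v : V} (p : G.Walk u v) : Prop :=
  IsShortestPath G p ∧ ∀ a b : V, G.dist a b ≤ p.length

/-- `k(G)`: minimum eccentricity over all shortest paths. -/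
noncomputable def minK [Fintype V] (G : SimpleGraph V) : ℕ :=
  sInf {n | ∃ (u v : V) (p : G.Walk u v), IsShortestPath G p ∧ walkEcc G p = n}

/-- `l(G)`: minimum eccentricity over all diameters. -/
noncomputable def minL [Fintype V] (G : SimpleGraph V) : ℕ :=
  sInf {n | ∃ (u v : V) (p : G.Walk u v), IsDiameter G p ∧ walkEcc G p = n}

/-- `s(G)`: maximum eccentricity over all diameters. -/
noncomputable def maxS [Fintype V] (G : SimpleGraph V) : ℕ :=
  sSup {n | ∃ (u v : V) (p : G.Walk u v), IsDiameter G p ∧ walkEcc G p = n}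

/-! ### Auxiliary lemmas -/

private lemma tri4 {G : SimpleGraph V} (hG : G.Connected) (a b c d : V) :
    G.dist a d ≤ G.dist a b + G.dist b c + G.dist c d := by
  have h1 : G.dist a d ≤ G.dist a c + G.dist c d := hG.dist_triangle
  have h2 : G.dist a c ≤ G.dist a b + G.dist b c := hG.dist_triangle
  omega

private lemma takeUntil_dist [DecidableEq V] {G : SimpleGraph V} (hG : G.Connected) {u v w : V}
    (P : G.Walk u v) (hP : P.length = G.dist u v) (hw : w ∈ P.support) :
    (P.takeUntil w hw).length = G.dist u w ∧ (P.dropUntil w hw).length = G.dist w v := by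
  have h1 : G.dist u w ≤ (P.takeUntil w hw).length := dist_le _
  have h2 : G.dist w v ≤ (P.dropUntil w hw).length := dist_le _
  have h3 : G.dist u v ≤ G.dist u w + G.dist w v := hG.dist_triangle
  have h4 : (P.takeUntil w hw).length + (P.dropUntil w hw).length = P.length := by
    rw [← Walk.length_append, P.take_spec hw]
  omega

private lemma dist_add_of_mem [DecidableEq V] {G : SimpleGraph V} (hG : G.Connected) {u v w : V}
    (P : G.Walk u v) (hP : P.length = G.dist u v) (hw : w ∈ P.support) :
    G.dist u w + G.dist w v = G.dist u v := by
  obtain ⟨h1, h2⟩ := takeUntil_dist hG P hP hw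
  have h4 : (P.takeUntil w hw).length + (P.dropUntil w hw).length = P.length := by
    rw [← Walk.length_append, P.take_spec hw]
  omega

private lemma pair_coord [DecidableEq V] {G : SimpleGraph V} (hG : G.Connected) {u v w1 w2 : V}
    (P : G.Walk u v) (hP : P.length = G.dist u v) (h1 : w1 ∈ P.support) (h2 : w2 ∈ P.support) :
    G.dist u w1 + G.dist w1 w2 = G.dist u w2 ∨ G.dist u w2 + G.dist w1 w2 = G.dist u w1 := by
  have h2' : w2 ∈ (P.takeUntil w1 h1).support ∨ w2 ∈ (P.dropUntil w1 h1).support := by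
    rw [← Walk.mem_support_append_iff, P.take_spec h1]; exact h2
  obtain ⟨hT, hD⟩ := takeUntil_dist hG P hP h1
  have e1 := dist_add_of_mem hG P hP h1
  have e2 := dist_add_of_mem hG P hP h2
  rcases h2' with hm | hm
  · right
    have e3 := dist_add_of_mem hG (P.takeUntil w1 h1) hT hm
    have hc : G.dist w2 w1 = G.dist w1 w2 := G.dist_comm
    omega
  · left
    have e3 := dist_add_of_mem hG (P.dropUntil w1 h1) hD hm
    have e4 := dist_add_of_mem hG P hP h2
    omega

private lemma exists_on_walk {G : SimpleGraph V} (hG : G.Connected) {s t : V} (p : G.Walk s t) :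
    ∀ i, i ≤ p.length → ∃ q ∈ p.support, G.dist s q ≤ i ∧ G.dist q t + i ≤ p.length := by
  induction p with
  | nil =>
    intro i hi
    refine ⟨_, Walk.start_mem_support _, ?_, ?_⟩ <;> simp_all [SimpleGraph.dist_self]
  | @cons a b c hadj p ih =>
    intro i hi
    match i with
    | 0 =>
      refine ⟨a, Walk.start_mem_support _, by simp [SimpleGraph.dist_self], ?_⟩
      simpa using dist_le (Walk.cons hadj p)
    | (j+1) =>
      obtain ⟨q, hqs, hq1, hq2⟩ := ih j (by simp [Walk.length_cons] at hi; omega)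
      refine ⟨q, by simp [hqs], ?_, ?_⟩
      · have t1 : G.dist a q ≤ G.dist a b + G.dist b q := hG.dist_triangle
        have t2 : G.dist a b ≤ 1 := by simpa using dist_le hadj.toWalk
        omega
      · simp [Walk.length_cons]; omega

private lemma main_bound [DecidableEq V] {G : SimpleGraph V} (hG : G.Connected) {u v x y : V}
    (P : G.Walk u v) (hP : P.length = G.dist u v) (k : ℕ)
    (hproj : ∀ z : V, ∃ p ∈ P.support, G.dist z p ≤ k)
    (hy : ∀ w : V, G.dist x w ≤ G.dist x y)
    {px : V} (hpxs : px ∈ P.support) (hpx : G.dist x px ≤ k) (hpxa : G.dist u px ≤ 3 * k)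
    (Q : G.Walk x y) (hQ : Q.length = G.dist x y)
    (z : V) : ∃ q ∈ Q.support, G.dist z q ≤ 5 * k := by
  obtain ⟨py, hpys, hpy⟩ := hproj y
  obtain ⟨pz, hpzs, hpz⟩ := hproj z
  have Lx := dist_add_of_mem hG P hP hpxs
  have Ly := dist_add_of_mem hG P hP hpys
  have Lz := dist_add_of_mem hG P hP hpzs
  by_cases hD5 : G.dist x y ≤ 5 * k
  · refine ⟨x, Q.start_mem_support, le_trans ?_ hD5⟩
    rw [G.dist_comm]; exact hy z
  have cxpx : G.dist px x = G.dist x px := G.dist_comm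
  have cypy : G.dist py y = G.dist y py := G.dist_comm
  have czpz : G.dist pz z = G.dist z pz := G.dist_comm
  have F3 : G.dist x y ≤ G.dist x px + G.dist px py + G.dist py y := tri4 hG x px py y
  have F3' : G.dist px py ≤ G.dist px x + G.dist x y + G.dist y py := tri4 hG px x y py
  have hpair := pair_coord hG P hP hpxs hpys
  rcases hpair with hpair | hpair; swap
  · exact (hD5 (by omega)).elim
  have key1 : G.dist x y + G.dist u px ≤ G.dist u py + 2 * k := by omega
  have key2 : G.dist u py ≤ G.dist u px + G.dist x y + 2 * k := by omega
  have F1 : G.dist px v ≤ k + G.dist x y := by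
    have t1 : G.dist px v ≤ G.dist px x + G.dist x v := hG.dist_triangle
    have t2 : G.dist x v ≤ G.dist x y := hy v
    omega
  by_cases hA : G.dist u pz + k < G.dist u px
  · -- use q = x
    have hp := pair_coord hG P hP hpzs hpxs
    have T : G.dist z x ≤ G.dist z pz + G.dist pz px + G.dist px x := tri4 hG z pz px x
    exact ⟨x, Q.start_mem_support, by omega⟩
  by_cases hB : G.dist u pz + k ≤ G.dist x y + G.dist u px
  · -- middle case: pick q on Q at distance (d(u,pz) + k - d(u,px)) from x
    obtain ⟨q, hqs, hq1, hq2⟩ :=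
      exists_on_walk hG Q (G.dist u pz + k - G.dist u px) (by omega)
    have txy : G.dist x y ≤ G.dist x q + G.dist q y := hG.dist_triangle
    obtain ⟨pq, hpqs, hpq⟩ := hproj q
    have cqpq : G.dist pq q = G.dist q pq := G.dist_comm
    have G1 : G.dist u pq ≤ G.dist u px + G.dist px pq := hG.dist_triangle
    have G1' : G.dist px pq ≤ G.dist px x + G.dist x q + G.dist q pq := tri4 hG px x q pq
    have G2 : G.dist u py ≤ G.dist u pq + G.dist pq py := hG.dist_triangle
    have G2' : G.dist pq py ≤ G.dist pq q + G.dist q y + G.dist y py := tri4 hG pq q y py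
    have hp := pair_coord hG P hP hpzs hpqs
    have T : G.dist z q ≤ G.dist z pz + G.dist pz pq + G.dist pq q := tri4 hG z pz pq q
    rw [hQ] at hq2
    exact ⟨q, hqs, by omega⟩
  · -- use q = y
    have hp := pair_coord hG P hP hpzs hpys
    have T : G.dist z y ≤ G.dist z pz + G.dist pz py + G.dist py y := tri4 hG z pz py y
    exact ⟨y, Q.end_mem_support, by omega⟩

theorem stmt2 [Fintype V] (G : SimpleGraph V) (hG : G.Connected)
    {u v : V} (P : G.Walk u v) (hP : IsShortestPath G P) (k : ℕ)
    (hecc : walkEcc G P = k)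
    (r x y : V)
    (hx : ∀ w : V, G.dist r w ≤ G.dist r x)
    (hy : ∀ w : V, G.dist x w ≤ G.dist x y)
    (Q : G.Walk x y) (hQ : IsShortestPath G Q) :
    walkEcc G Q ≤ 5 * k := by
  classical
  have hP' : P.length = G.dist u v := hP
  have hQ' : Q.length = G.dist x y := hQ
  have hproj : ∀ z : V, ∃ p ∈ P.support, G.dist z p ≤ k := by
    intro z
    have h1 : walkDist G z P ≤ k := by
      rw [← hecc]
      exact le_csSup ((Set.finite_range fun w => walkDist G w P).bddAbove) ⟨z, rfl⟩
    have h2 : walkDist G z P ∈ {n | ∃ w ∈ P.support, G.dist z w = n} :=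
      Nat.sInf_mem ⟨G.dist z u, u, P.start_mem_support, rfl⟩
    obtain ⟨w, hw, hwd⟩ := h2
    exact ⟨w, hw, by omega⟩
  obtain ⟨px, hpxs, hpx⟩ := hproj x
  obtain ⟨pr, hprs, hpr⟩ := hproj r
  have Lx := dist_add_of_mem hG P hP' hpxs
  have Lr := dist_add_of_mem hG P hP' hprs
  have hrx1 : G.dist r u ≤ G.dist r x := hx u
  have hrx2 : G.dist r v ≤ G.dist r x := hx v
  have hpair := pair_coord hG P hP' hprs hpxs
  have T1 : G.dist r x ≤ G.dist r pr + G.dist pr px + G.dist px x := tri4 hG r pr px x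
  have T2 : G.dist u pr ≤ G.dist u r + G.dist r pr := hG.dist_triangle
  have T3 : G.dist pr v ≤ G.dist pr r + G.dist r v := hG.dist_triangle
  have c1 : G.dist pr r = G.dist r pr := G.dist_comm
  have c2 : G.dist px x = G.dist x px := G.dist_comm
  have c3 : G.dist u r = G.dist r u := G.dist_comm
  have horient : G.dist u px ≤ 3 * k ∨ G.dist px v ≤ 3 * k := by
    rcases hpair with h | h
    · right; omega
    · left; omega
  have key : ∀ z : V, ∃ q ∈ Q.support, G.dist z q ≤ 5 * k := by
    rcases horient with h | h
    · exact fun z => main_bound hG P hP' k hproj hy hpxs hpx h Q hQ' z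
    · have hP2 : P.reverse.length = G.dist v u := by
        rw [Walk.length_reverse, G.dist_comm]; exact hP'
      have hproj2 : ∀ z : V, ∃ p ∈ P.reverse.support, G.dist z p ≤ k := by
        intro z; obtain ⟨p, hp, hd⟩ := hproj z
        exact ⟨p, by rw [Walk.support_reverse]; exact List.mem_reverse.mpr hp, hd⟩
      have hpxs2 : px ∈ P.reverse.support := by
        rw [Walk.support_reverse]; exact List.mem_reverse.mpr hpxs
      have h2 : G.dist v px ≤ 3 * k := by rw [G.dist_comm]; exact h
      exact fun z => main_bound hG P.reverse hP2 k hproj2 hy hpxs2 hpx h2 Q hQ' z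
  have hall : ∀ z : V, walkDist G z Q ≤ 5 * k := by
    intro z; obtain ⟨q, hq, hdq⟩ := key z
    exact le_trans (Nat.sInf_le ⟨q, hq, rfl⟩) hdq
  exact csSup_le ⟨walkDist G x Q, x, rfl⟩ (by rintro n ⟨z, rfl⟩; exact hall z)
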